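/- arXiv:math/0401012 — 3 statements merged into one kernel-verified Lean document; each statement's English description precedes it below -/
import Mathlib

section
/- As an identity of formal power series in q with coefficients in the Laurent polynomial ring ℤ[y, y⁻¹]: the sum over all partitions π of y^{srank(π)} q^{|π|} equals 1/(q⁴;q⁴)_∞ times the sum over all partitions π₂ having no repeated even parts of y^{srank(π₂)} q^{|π₂|}. Equivalently, for each n ≥ 0 and each integer s, the number of partitions of n with srank equal to s equals the sum over m ≥ 0 of p(m) times the number of partitions of n − 4m with no repeated even part and srank equal to s. -/
open scoped Classical

namespace AndrewsStanley

/-- `O(π)`: the number of odd parts of the partition `π`. -/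
def numOdd {n : ℕ} (π : n.Partition) : ℕ := (π.parts.filter (fun j => Odd j)).card

/-- The length of the `i`-th column (`i ≥ 1`) of the Young diagram of `π`,
i.e. the `i`-th part of the conjugate partition `π'`. -/
def colLen {n : ℕ} (π : n.Partition) (i : ℕ) : ℕ := (π.parts.filter (fun j => i ≤ j)).card

/-- `O(π')`: the number of odd parts of the conjugate partition `π'`.
(All parts of `π` are at most `n`, so all columns of the diagram have index in `[1, n]`.) -/
def numOddConj {n : ℕ} (π : n.Partition) : ℕ :=
  ((Finset.Icc 1 n).filter (fun i => Odd (colLen π i))).card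

/-- Stanley's statistic `srank(π) = O(π) - O(π')`. -/
def srank {n : ℕ} (π : n.Partition) : ℤ := (numOdd π : ℤ) - (numOddConj π : ℤ)

/-- A partition has no repeated even parts. -/
def NoRepEven {n : ℕ} (π : n.Partition) : Prop := ∀ j : ℕ, Even j → π.parts.count j ≤ 1

/-- `p_i(N)`: the number of partitions of `N` with `srank ≡ i (mod 4)`. -/
noncomputable def pMod (i : ℤ) (N : ℕ) : ℕ :=
  (Finset.univ.filter (fun π : N.Partition => srank π % 4 = i)).card

/-- The Andrews–Garvan crank, defined on a multiset of parts: the largest part if there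
are no ones, and otherwise the number of parts larger than the number of ones minus
the number of ones. -/
def mcrank (s : Multiset ℕ) : ℤ :=
  if s.count 1 = 0 then (s.sup : ℤ)
  else ((s.filter (fun j => s.count 1 < j)).card : ℤ) - (s.count 1 : ℤ)

/-- The parts of the partition `π₁` in which `j` occurs `⌊f_{2j}(π)/2⌋` times. -/
def halfEvenParts {n : ℕ} (π : n.Partition) : Multiset ℕ :=
  (Finset.Icc 1 n).val.bind (fun j => Multiset.replicate (π.parts.count (2 * j) / 2) j)

/-- The second largest part `λ₂` of a partition (counted with multiplicity; `0` if
there are fewer than two parts). -/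
def secondPart {n : ℕ} (π : n.Partition) : ℕ := (π.parts.erase π.parts.sup).sup

/-- Partitions of type B: either `π = (3,1)`, or `|π| ≠ 4`, `λ₁ - λ₂ ≥ 2`,
`λ'₁ - λ'₂ ≥ 2`, `λ₁ - 2` and `λ₂` are not identical even integers, and `π` has no
repeated even parts. -/
def TypeB {n : ℕ} (π : n.Partition) : Prop :=
  π.parts = {3, 1} ∨
    (n ≠ 4 ∧ secondPart π + 2 ≤ π.parts.sup ∧ colLen π 2 + 2 ≤ colLen π 1 ∧
      ¬(π.parts.sup = secondPart π + 2 ∧ Even (secondPart π)) ∧ NoRepEven π)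

/-- `stcrank(π) = crank(π₁) + srank(π)/2 + Ψ(π)` where `Ψ(π) = 1` iff `π` is of type B. -/
noncomputable def stcrank {n : ℕ} (π : n.Partition) : ℤ :=
  mcrank (halfEvenParts π) + srank π / 2 + (if TypeB π then 1 else 0)

/-- `P_i(k, m, N)`: the number of partitions of `N` with `srank ≡ i (mod 4)` and
`stcrank ≡ k (mod m)`. -/
noncomputable def Pcount (i k : ℤ) (m : ℕ) (N : ℕ) : ℕ :=
  (Finset.univ.filter
    (fun π : N.Partition => srank π % 4 = i ∧ stcrank π % (m : ℤ) = k)).card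

/-- The parts of `π` listed in (weakly) decreasing order. -/
def partsList {n : ℕ} (π : n.Partition) : List ℕ := (π.parts.sort (· ≤ ·)).reverse

/-- `λ_a`, the length of the `a`-th row (`a ≥ 1`) of the Young diagram of `π`. -/
def rowLen {n : ℕ} (π : n.Partition) (a : ℕ) : ℕ := (partsList π).getD (a - 1) 0

/-- The hook length of the cell in row `a` and column `b` (both `1`-indexed). -/
def hookLen {n : ℕ} (π : n.Partition) (a b : ℕ) : ℕ :=
  (rowLen π a - b) + (colLen π b - a) + 1

/-- A partition is a `t`-core if no hook length of its Young diagram equals `t`. -/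
def IsCore (t : ℕ) {n : ℕ} (π : n.Partition) : Prop :=
  ∀ a b : ℕ, 1 ≤ a → 1 ≤ b → b ≤ rowLen π a → hookLen π a b ≠ t

/-- `a_t(N)`: the number of partitions of `N` that are `t`-cores. -/
noncomputable def coreCount (t N : ℕ) : ℕ :=
  (Finset.univ.filter (fun π : N.Partition => IsCore t π)).card

/-- `r_j(π)`: the number of cells in row `a`, column `b` (1-indexed) of the Young
diagram of `π` with `b - a ≡ j (mod 5)`. -/
noncomputable def rres {n : ℕ} (π : n.Partition) (j : ℕ) : ℕ :=
  ∑ a ∈ Finset.Icc 1 (Multiset.card π.parts),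
    ((Finset.Icc 1 (rowLen π a)).filter (fun b => ((b : ℤ) - (a : ℤ)) % 5 = (j : ℤ))).card

/-- The Garvan–Kim–Stanton 5-core crank (as a representative modulo 5):
`d₅(π) = 2 + 2r₀(π) + r₁(π) - r₃(π) - 2r₄(π)`. -/
noncomputable def d5 {n : ℕ} (π : n.Partition) : ℤ :=
  2 + 2 * (rres π 0 : ℤ) + (rres π 1 : ℤ) - (rres π 3 : ℤ) - 2 * (rres π 4 : ℤ)

/-- `a_{5,i}(N)`: the number of 5-core partitions of `N` with `srank ≡ i (mod 4)`. -/
noncomputable def a5srank (i : ℤ) (N : ℕ) : ℕ :=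
  (Finset.univ.filter (fun π : N.Partition => IsCore 5 π ∧ srank π % 4 = i)).card

/-- The infinite product `∏_{j≥0} f j` of power series, in the situation (as for all
the products occurring here) where the factor `f j` is of the form `1 + (terms of
degree > j)`, so that the coefficient of `q^N` in the partial products stabilizes:
it is the corresponding coefficient in `∏_{j ≤ N} f j`. -/
noncomputable def infProd {R : Type*} [CommRing R] (f : ℕ → PowerSeries R) :
    PowerSeries R :=
  PowerSeries.mk fun N => PowerSeries.coeff N (∏ j ∈ Finset.range (N + 1), f j)


def dbl (μ : Multiset ℕ) : Multiset ℕ := μ.bind (fun j => {2*j, 2*j})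

@[simp] lemma dbl_zero : dbl 0 = 0 := rfl

@[simp] lemma dbl_cons (a : ℕ) (μ : Multiset ℕ) : dbl (a ::ₘ μ) = 2*a ::ₘ 2*a ::ₘ dbl μ := by
  simp [dbl, Multiset.cons_bind, Multiset.insert_eq_cons]

@[simp] lemma dbl_sum (μ : Multiset ℕ) : (dbl μ).sum = 4 * μ.sum := by
  induction μ using Multiset.induction with
  | empty => simp
  | cons a μ ih => simp [ih]; ring

lemma mem_dbl {a : ℕ} {μ : Multiset ℕ} : a ∈ dbl μ ↔ ∃ j ∈ μ, a = 2*j := by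
  simp [dbl, Multiset.mem_bind, Multiset.insert_eq_cons, eq_comm]

lemma count_dbl (j : ℕ) (μ : Multiset ℕ) : (dbl μ).count (2*j) = 2 * μ.count j := by
  induction μ using Multiset.induction with
  | empty => simp
  | cons a μ ih =>
    by_cases h : a = j <;> simp [h, ih, Multiset.count_cons] <;> omega

lemma count_dbl_odd {v : ℕ} (hv : ¬ Even v) (μ : Multiset ℕ) : (dbl μ).count v = 0 := by
  rw [Multiset.count_eq_zero]
  intro hmem
  obtain ⟨j, _, rfl⟩ := mem_dbl.mp hmem
  exact hv ⟨j, by ring⟩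

lemma even_card_filter_dbl (p : ℕ → Prop) [DecidablePred p] (μ : Multiset ℕ) :
    Even ((dbl μ).filter p).card := by
  induction μ using Multiset.induction with
  | empty => simp
  | cons a μ ih =>
    rw [dbl_cons]
    by_cases h : p (2*a) <;> simp [Multiset.filter_cons, h]
    · obtain ⟨c, hc⟩ := ih; exact ⟨c+1, by omega⟩
    · exact ih


lemma decomp_unique {μ₁ ν₁ μ₂ ν₂ : Multiset ℕ}
    (h₁ : ∀ v, Even v → ν₁.count v ≤ 1) (h₂ : ∀ v, Even v → ν₂.count v ≤ 1)
    (h : ν₁ + dbl μ₁ = ν₂ + dbl μ₂) : ν₁ = ν₂ ∧ μ₁ = μ₂ := by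
  have key : ∀ c : ℕ, ν₁.count (2*c) = ν₂.count (2*c) ∧ μ₁.count c = μ₂.count c := by
    intro c
    have hc := congrArg (Multiset.count (2*c)) h
    simp only [Multiset.count_add, count_dbl] at hc
    have e₁ := h₁ (2*c) ⟨c, by ring⟩
    have e₂ := h₂ (2*c) ⟨c, by ring⟩
    omega
  constructor
  · ext v
    by_cases hv : Even v
    · obtain ⟨c, rfl⟩ := hv
      have := (key c).1
      simpa [two_mul] using this
    · have hc := congrArg (Multiset.count v) h
      simp only [Multiset.count_add, count_dbl_odd hv] at hc
      omega
  · ext c; exact (key c).2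

lemma exists_decomp (p : Multiset ℕ) :
    ∃ μ ν : Multiset ℕ, (∀ v, Even v → ν.count v ≤ 1) ∧ p = ν + dbl μ := by
  suffices H : ∀ N (p : Multiset ℕ), Multiset.card p ≤ N →
      ∃ μ ν : Multiset ℕ, (∀ v, Even v → ν.count v ≤ 1) ∧ p = ν + dbl μ from
    H (Multiset.card p) p le_rfl
  intro N
  induction N with
  | zero =>
    intro p hp
    have : p = 0 := Multiset.card_eq_zero.mp (Nat.le_zero.mp hp)
    exact ⟨0, 0, by simp, by simp [this, dbl]⟩
  | succ N ih =>
    intro p hp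
    by_cases hnre : ∀ v, Even v → p.count v ≤ 1
    · exact ⟨0, p, hnre, by simp [dbl]⟩
    · push_neg at hnre
      obtain ⟨v, hv, hcount⟩ := hnre
      have hv1 : v ∈ p := Multiset.count_pos.mp (by omega)
      have hv2 : v ∈ p.erase v := by
        rw [← Multiset.count_pos, Multiset.count_erase_self]; omega
      set p' := (p.erase v).erase v with hp'
      have hpeq : p = v ::ₘ v ::ₘ p' := by
        rw [hp', Multiset.cons_erase hv2, Multiset.cons_erase hv1]
      have hcard : Multiset.card p' ≤ N := by
        have h1 := Multiset.card_erase_of_mem hv1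
        have h2 := Multiset.card_erase_of_mem hv2
        have h3 : 2 ≤ Multiset.card p := le_trans hcount (Multiset.count_le_card v p)
        simp only [Nat.pred_eq_sub_one] at h1 h2
        rw [hp']; omega
      obtain ⟨μ, ν, hν, hdec⟩ := ih p' hcard
      refine ⟨v/2 ::ₘ μ, ν, hν, ?_⟩
      obtain ⟨c, hc⟩ := hv
      have hvc : 2 * (v/2) = v := by omega
      rw [hpeq, hdec, dbl_cons, hvc]
      simp [Multiset.add_cons]



lemma part_le {k : ℕ} (ν : k.Partition) {a : ℕ} (ha : a ∈ ν.parts) : a ≤ k := by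
  have := Multiset.single_le_sum (fun x _ => Nat.zero_le x) a ha
  rwa [ν.parts_sum] at this

lemma srank_combine {n k : ℕ} (hk : k ≤ n) (π : n.Partition) (ν : k.Partition)
    (μ : Multiset ℕ) (h : π.parts = ν.parts + dbl μ) : srank π = srank ν := by
  have h1 : numOdd π = numOdd ν := by
    unfold numOdd
    rw [h, Multiset.filter_add]
    have : (dbl μ).filter (fun j => Odd j) = 0 := by
      rw [Multiset.filter_eq_nil]
      intro a ha
      obtain ⟨j, _, rfl⟩ := mem_dbl.mp ha
      simp [Nat.even_iff, Nat.odd_iff, Nat.mul_mod_right]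
    rw [this, add_zero]
  have h2 : ∀ i, Odd (colLen π i) ↔ Odd (colLen ν i) := by
    intro i
    unfold colLen
    rw [h, Multiset.filter_add, Multiset.card_add]
    obtain ⟨c, hc⟩ := even_card_filter_dbl (fun j => i ≤ j) μ
    rw [hc]
    simp [Nat.odd_iff]; omega
  have h3 : numOddConj π = numOddConj ν := by
    unfold numOddConj
    have : ∀ i, i ∈ Finset.Icc 1 n → (Odd (colLen π i) ↔ Odd (colLen ν i)) := fun i _ => h2 i
    rw [Finset.filter_congr (fun i hi => by simpa using h2 i)]
    congr 1
    apply Finset.ext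
    intro i
    simp only [Finset.mem_filter, Finset.mem_Icc]
    constructor
    · rintro ⟨⟨hi1, hi2⟩, hodd⟩
      refine ⟨⟨hi1, ?_⟩, hodd⟩
      by_contra hik
      have : colLen ν i = 0 := by
        unfold colLen
        rw [Multiset.card_eq_zero, Multiset.filter_eq_nil]
        intro a ha
        have := part_le ν ha
        omega
      rw [this] at hodd
      simp at hodd
    · rintro ⟨⟨hi1, hi2⟩, hodd⟩
      exact ⟨⟨hi1, le_trans hi2 hk⟩, hodd⟩
  unfold srank
  rw [h1, h3]



def combine (n m : ℕ) (h : 4*m ≤ n) (μ : Nat.Partition m) (ν : Nat.Partition (n - 4*m)) :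
    Nat.Partition n where
  parts := ν.parts + dbl μ.parts
  parts_pos := by
    intro i hi
    rcases Multiset.mem_add.mp hi with h' | h'
    · exact ν.parts_pos h'
    · obtain ⟨j, hj, rfl⟩ := mem_dbl.mp h'
      have := μ.parts_pos hj
      omega
  parts_sum := by
    rw [Multiset.sum_add, dbl_sum, ν.parts_sum, μ.parts_sum]
    omega

lemma partition_ext {n : ℕ} {π₁ π₂ : n.Partition} (h : π₁.parts = π₂.parts) : π₁ = π₂ := by
  cases π₁; cases π₂; simp_all

/-- For each `n ≥ 0` and each integer `s`, the number of partitions of `n`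
with `srank = s` equals `∑_{m ≥ 0} p(m) ·` (number of partitions of `n - 4m` with no
repeated even part and `srank = s`).  (Terms with `4m > n` vanish, so the sum is taken
over `m ≤ n/4`.) -/
theorem srank_count_factorization (n : ℕ) (s : ℤ) :
    (Finset.univ.filter (fun π : n.Partition => srank π = s)).card =
      ∑ m ∈ Finset.range (n / 4 + 1),
        Fintype.card (Nat.Partition m) *
          (Finset.univ.filter
            (fun π : Nat.Partition (n - 4 * m) => NoRepEven π ∧ srank π = s)).card := by
  classical
  set T := (Finset.range (n/4+1)).sigma
      (fun m => (Finset.univ : Finset (Nat.Partition m)) ×ˢ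
        (Finset.univ.filter (fun ν : Nat.Partition (n - 4*m) => NoRepEven ν ∧ srank ν = s)))
    with hT
  have hTcard : T.card = ∑ m ∈ Finset.range (n / 4 + 1),
      Fintype.card (Nat.Partition m) *
        (Finset.univ.filter
          (fun π : Nat.Partition (n - 4 * m) => NoRepEven π ∧ srank π = s)).card := by
    rw [hT, Finset.card_sigma]
    refine Finset.sum_congr rfl fun m _ => ?_
    rw [Finset.card_product, Finset.card_univ]
  rw [← hTcard]
  have h4m : ∀ a : (Σ m : ℕ, Nat.Partition m × Nat.Partition (n - 4*m)), a ∈ T → 4 * a.1 ≤ n := by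
    intro a ha
    rw [hT, Finset.mem_sigma] at ha
    have := Finset.mem_range.mp ha.1
    omega
  refine (Finset.card_bij (fun a ha => combine n a.1 (h4m a ha) a.2.1 a.2.2) ?_ ?_ ?_).symm
  · -- maps to target
    intro a ha
    rw [hT, Finset.mem_sigma, Finset.mem_product, Finset.mem_filter] at ha
    obtain ⟨_, _, _, _, hsrank⟩ := ha
    rw [Finset.mem_filter]
    refine ⟨Finset.mem_univ _, ?_⟩
    rw [srank_combine (Nat.sub_le n (4*a.1)) _ a.2.2 a.2.1.parts rfl]
    exact hsrank
  · -- injective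
    intro a ha b hb heq
    have hpe : a.2.2.parts + dbl a.2.1.parts = b.2.2.parts + dbl b.2.1.parts :=
      congrArg Nat.Partition.parts heq
    rw [hT, Finset.mem_sigma, Finset.mem_product, Finset.mem_filter] at ha hb
    obtain ⟨hν, hμ⟩ := decomp_unique ha.2.2.2.1 hb.2.2.2.1 hpe
    obtain ⟨m₁, μ₁, ν₁⟩ := a
    obtain ⟨m₂, μ₂, ν₂⟩ := b
    simp only at hν hμ
    have hm : m₁ = m₂ := by
      rw [← μ₁.parts_sum, ← μ₂.parts_sum, hμ]
    subst hm
    have : μ₁ = μ₂ := partition_ext hμ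
    have : ν₁ = ν₂ := partition_ext hν
    simp_all
  · -- surjective
    intro π hπ
    have hs : srank π = s := (Finset.mem_filter.mp hπ).2
    obtain ⟨μms, νms, hnre, hdec⟩ := exists_decomp π.parts
    have hsum : n = νms.sum + 4 * μms.sum := by
      have hps := π.parts_sum
      rw [hdec, Multiset.sum_add, dbl_sum] at hps
      omega
    set m := μms.sum with hm
    have hμpos : ∀ j ∈ μms, 0 < j := by
      intro j hj
      have : 2*j ∈ π.parts := by
        rw [hdec]
        exact Multiset.mem_add.mpr (Or.inr (mem_dbl.mpr ⟨j, hj, rfl⟩))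
      have := π.parts_pos this
      omega
    have hνpos : ∀ v ∈ νms, 0 < v := by
      intro v hv
      exact π.parts_pos (by rw [hdec]; exact Multiset.mem_add.mpr (Or.inl hv))
    have hle : 4 * m ≤ n := by omega
    set μP : Nat.Partition m := ⟨μms, fun {j} hj => hμpos j hj, rfl⟩ with hμP
    set νP : Nat.Partition (n - 4*m) := ⟨νms, fun {v} hv => hνpos v hv, by omega⟩ with hνP
    have hss : srank νP = s := by
      rw [← srank_combine (Nat.sub_le n (4*m)) π νP μms hdec]
      exact hs
    refine ⟨⟨m, μP, νP⟩, ?_, ?_⟩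
    · rw [hT, Finset.mem_sigma, Finset.mem_product, Finset.mem_filter]
      refine ⟨Finset.mem_range.mpr (show m < n/4+1 by omega), Finset.mem_univ _,
        Finset.mem_univ _, ?_, hss⟩
      exact fun j hj => hnre j hj
    · apply partition_ext
      show νms + dbl μms = π.parts
      exact hdec.symm


end AndrewsStanley
end

section
/- Let n₀, n₁, n₂, n₃, n₄ be integers with n₀ + n₁ + n₂ + n₃ + n₄ = 0, and define n'₀ = n₁ + 2n₂ + 2n₄ + 1, n'₁ = −n₁ − n₂ + n₃ + n₄ + 1, n'₂ = 2n₁ + n₂ + 2n₃, n'₃ = −2n₂ − 2n₃ − n₄ − 1, n'₄ = −2n₁ − n₃ − 2n₄ − 1. Then Σ_{i=0}^{4} ( (n_i + i)³ − (n'_i + i)³ ) ≡ 0 (mod 4). -/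
open scoped Classical

namespace AndrewsStanley

/-- if `n₀ + n₁ + n₂ + n₃ + n₄ = 0` and `n'ᵢ` are given by the
indicated linear forms, then `Σ_{i=0}^{4} ((nᵢ + i)³ - (n'ᵢ + i)³) ≡ 0 (mod 4)`. -/
theorem cube_sum_congruence (n0 n1 n2 n3 n4 : ℤ)
    (h : n0 + n1 + n2 + n3 + n4 = 0) :
    (4 : ℤ) ∣
      ((n0 + 0) ^ 3 - ((n1 + 2 * n2 + 2 * n4 + 1) + 0) ^ 3) +
        ((n1 + 1) ^ 3 - ((-n1 - n2 + n3 + n4 + 1) + 1) ^ 3) +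
        ((n2 + 2) ^ 3 - ((2 * n1 + n2 + 2 * n3) + 2) ^ 3) +
        ((n3 + 3) ^ 3 - ((-2 * n2 - 2 * n3 - n4 - 1) + 3) ^ 3) +
        ((n4 + 4) ^ 3 - ((-2 * n1 - n3 - 2 * n4 - 1) + 4) ^ 3) := by
  have h0 : n0 = -(n1 + n2 + n3 + n4) := by linarith
  subst h0
  rw [show (4:ℤ) = ((4:ℕ):ℤ) by norm_num, ← ZMod.intCast_zmod_eq_zero_iff_dvd]
  push_cast
  generalize (n1 : ZMod 4) = a
  generalize (n2 : ZMod 4) = b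
  generalize (n3 : ZMod 4) = c
  generalize (n4 : ZMod 4) = d
  revert a b c d
  decide

end AndrewsStanley
end

section
/- For every n ≥ 0, a_{5,0}(4n) = a₅(4n) and a_{5,0}(4n+1) = a₅(4n+1); that is, every 5-core partition of an integer congruent to 0 or 1 modulo 4 has srank ≡ 0 (mod 4). -/
open scoped Classical

namespace AndrewsStanley

lemma sum_getD {M : Type*} [AddCommMonoid M] (l : List ℕ) (f : ℕ → M) (hf : f 0 = 0) :
    ∀ K, l.length ≤ K → ∑ i ∈ Finset.range K, f (l.getD i 0) = (l.map f).sum := by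
  induction l with
  | nil => intro K _; simp [hf]
  | cons h t ih =>
    intro K hK
    cases K with
    | zero => simp at hK
    | succ K' =>
      rw [Finset.sum_range_succ']
      simp only [List.getD_cons_succ, List.getD_cons_zero]
      rw [ih K' (by simpa using hK)]
      simp [add_comm]

lemma Icc_int_succ (u v : ℤ) (h : u ≤ v + 1) :
    Finset.Icc u (v + 1) = insert (v + 1) (Finset.Icc u v) := by
  ext x; simp only [Finset.mem_Icc, Finset.mem_insert]; omega

lemma gauss_Icc (u v : ℤ) (h : u - 1 ≤ v) :
    2 * ∑ k ∈ Finset.Icc u v, k = (u + v) * (v - u + 1) := by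
  obtain ⟨d, hd⟩ : ∃ d : ℕ, v = u - 1 + d := ⟨(v - (u - 1)).toNat, by omega⟩
  subst hd
  clear h
  induction d with
  | zero => simp [Finset.Icc_eq_empty_of_lt (by omega : u - 1 + (0:ℕ) < u)]
  | succ d ih =>
    have hv : u - 1 + ((d : ℤ) + 1) = (u - 1 + d) + 1 := by ring
    push_cast
    push_cast at ih
    rw [hv, Icc_int_succ u _ (by omega), Finset.sum_insert (by simp)]
    ring_nf
    ring_nf at ih
    omega

lemma mod2_sum_Icc (u v : ℤ) (h : u - 1 ≤ v) :
    2 * ∑ k ∈ Finset.Icc u v, (k % 2) = (v - u) + u % 2 + v % 2 := by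
  obtain ⟨d, hd⟩ : ∃ d : ℕ, v = u - 1 + d := ⟨(v - (u - 1)).toNat, by omega⟩
  subst hd
  clear h
  induction d with
  | zero => simp [Finset.Icc_eq_empty_of_lt (by omega : u - 1 + (0:ℕ) < u)]; omega
  | succ d ih =>
    have hv : u - 1 + ((d : ℕ) + 1 : ℕ) = (u - 1 + d) + 1 := by push_cast; ring
    rw [hv, Icc_int_succ u _ (by omega), Finset.sum_insert (by simp)]
    push_cast at ih ⊢
    omega

lemma L8 (m : ℤ) : ∃ t : ℤ, 5 * (m ^ 2 + m) = 8 * t + 3 * m + (m % 2) * (1 - 2 * m) := by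
  obtain ⟨u, s, hm, hs⟩ : ∃ u s, m = 4 * u + s ∧ (s = 0 ∨ s = 1 ∨ s = 2 ∨ s = 3) :=
    ⟨m / 4, m % 4, by omega, by omega⟩
  have hm2 : m % 2 = s % 2 := by omega
  rcases hs with h | h | h | h <;> subst h <;>
    rw [hm2] <;> norm_num <;> subst hm
  · exact ⟨10 * u ^ 2 + u, by ring⟩
  · exact ⟨10 * u ^ 2 + 7 * u + 1, by ring⟩
  · exact ⟨10 * u ^ 2 + 11 * u + 3, by ring⟩
  · exact ⟨10 * u ^ 2 + 17 * u + 7, by ring⟩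

set_option maxHeartbeats 1000000 in
lemma arith_main (m0 m1 m2 m3 m4 N : ℤ)
    (hsum : m0 + m1 + m2 + m3 + m4 = -5)
    (h2n : 2 * N = 20 + 2 * (m1 + 2 * m2 + 3 * m3 + 4 * m4) +
      5 * ((m0 ^ 2 + m0) + (m1 ^ 2 + m1) + (m2 ^ 2 + m2) + (m3 ^ 2 + m3) + (m4 ^ 2 + m4)))
    (hN : N % 4 = 0 ∨ N % 4 = 1) :
    (8 : ℤ) ∣ (2 * N - 3 +
      (m0 % 2 + (m1 + 1) % 2 + (m2 + 2) % 2 + (m3 + 3) % 2 + (m4 + 4) % 2)) := by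
  obtain ⟨t0, h0⟩ := L8 m0
  obtain ⟨t1, h1⟩ := L8 m1
  obtain ⟨t2, h2⟩ := L8 m2
  obtain ⟨t3, h3⟩ := L8 m3
  obtain ⟨t4, h4⟩ := L8 m4
  have key : 2 * N = 20 + 2 * (m1 + 2 * m2 + 3 * m3 + 4 * m4) +
      ((8 * t0 + 3 * m0 + (m0 % 2) * (1 - 2 * m0)) + (8 * t1 + 3 * m1 + (m1 % 2) * (1 - 2 * m1)) +
       (8 * t2 + 3 * m2 + (m2 % 2) * (1 - 2 * m2)) + (8 * t3 + 3 * m3 + (m3 % 2) * (1 - 2 * m3)) +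
       (8 * t4 + 3 * m4 + (m4 % 2) * (1 - 2 * m4))) := by
    linear_combination h2n + h0 + h1 + h2 + h3 + h4
  clear h0 h1 h2 h3 h4 h2n
  rcases Int.emod_two_eq m0 with e0 | e0 <;> rcases Int.emod_two_eq m1 with e1 | e1 <;>
    rcases Int.emod_two_eq m2 with e2 | e2 <;> rcases Int.emod_two_eq m3 with e3 | e3 <;>
    rcases Int.emod_two_eq m4 with e4 | e4 <;>
  · rw [e0, e1, e2, e3, e4] at key
    simp only [zero_mul, one_mul, add_zero] at key
    omega









section Bridge
variable {n : ℕ} (π : n.Partition)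

lemma partsList_coe : ((partsList π : List ℕ) : Multiset ℕ) = π.parts := by
  unfold partsList
  rw [show (((π.parts.sort (· ≤ ·)).reverse : List ℕ) : Multiset ℕ)
      = ↑(π.parts.sort (· ≤ ·)) from Multiset.coe_eq_coe.mpr (List.reverse_perm _)]
  exact Multiset.sort_eq ..

lemma partsList_length : (partsList π).length = Multiset.card π.parts := by
  rw [← partsList_coe π]; simp

lemma partsList_sorted : (partsList π).Pairwise (fun x y => y ≤ x) := by
  unfold partsList
  rw [List.pairwise_reverse]
  exact Multiset.pairwise_sort ..

lemma rowLen_eq_getD (a : ℕ) : rowLen π a = (partsList π).getD (a - 1) 0 := rfl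

lemma rowLen_anti {a a' : ℕ} (h : a ≤ a') : rowLen π a' ≤ rowLen π a := by
  unfold rowLen
  by_cases h2 : a' - 1 < (partsList π).length
  · have h1 : a - 1 < (partsList π).length := by omega
    rw [List.getD_eq_getElem?_getD, List.getD_eq_getElem?_getD,
        List.getElem?_eq_getElem h1, List.getElem?_eq_getElem h2]
    simp only [Option.getD_some]
    rcases Nat.lt_or_ge (a - 1) (a' - 1) with hl | hl
    · have := (partsList_sorted π).rel_get_of_lt
        (a := ⟨a - 1, h1⟩) (b := ⟨a' - 1, h2⟩) (by simpa using hl)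
      simpa using this
    · have hh : a - 1 = a' - 1 := by omega
      simp [hh]
  · rw [List.getD_eq_getElem?_getD (l := partsList π) (i := a' - 1),
      List.getElem?_eq_none (by omega)]
    simp

lemma sum_f_rowLen {M : Type*} [AddCommMonoid M] (f : ℕ → M) (hf : f 0 = 0) (K : ℕ)
    (hK : Multiset.card π.parts ≤ K) :
    ∑ a ∈ Finset.Icc 1 K, f (rowLen π a) = (π.parts.map f).sum := by
  have h1 : ∑ a ∈ Finset.Icc 1 K, f (rowLen π a)
      = ∑ i ∈ Finset.range K, f ((partsList π).getD i 0) := by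
    rw [← Finset.Ico_add_one_right_eq_Icc, Finset.sum_Ico_eq_sum_range]
    have : K + 1 - 1 = K := by omega
    rw [this]
    refine Finset.sum_congr rfl fun i _ => ?_
    rw [rowLen_eq_getD]
    have h' : 1 + i - 1 = i := by omega
    rw [h']
  rw [h1, sum_getD (partsList π) f hf K (by rw [partsList_length]; exact hK)]
  rw [← partsList_coe π]
  simp

lemma indicator_sum_multiset (s : Multiset ℕ) (p : ℕ → Prop) [DecidablePred p] :
    (s.map (fun x => if p x then (1 : ℕ) else 0)).sum = Multiset.card (s.filter p) := by
  induction s using Multiset.induction_on with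
  | empty => simp
  | cons a s ih =>
    by_cases h : p a <;> simp [Multiset.filter_cons, h, ih, Nat.add_comm]

lemma card_filter_rowLen (p : ℕ → Prop) [DecidablePred p] (hp : ¬ p 0) (K : ℕ)
    (hK : Multiset.card π.parts ≤ K) :
    ((Finset.Icc 1 K).filter (fun a => p (rowLen π a))).card
      = Multiset.card (π.parts.filter p) := by
  rw [Finset.card_filter,
    sum_f_rowLen π (fun x => if p x then 1 else 0) (by simp [hp]) K hK,
    indicator_sum_multiset]

lemma sum_rowLen (K : ℕ) (hK : Multiset.card π.parts ≤ K) :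
    ∑ a ∈ Finset.Icc 1 K, rowLen π a = n := by
  have := sum_f_rowLen π id rfl K hK
  simpa [π.parts_sum] using this

lemma colLen_eq (b : ℕ) (hb : 1 ≤ b) (K : ℕ) (hK : Multiset.card π.parts ≤ K) :
    colLen π b = ((Finset.Icc 1 K).filter (fun a => b ≤ rowLen π a)).card := by
  rw [colLen, ← card_filter_rowLen π (fun j => b ≤ j) (by omega) K hK]

lemma numOdd_eq (K : ℕ) (hK : Multiset.card π.parts ≤ K) :
    numOdd π = ((Finset.Icc 1 K).filter (fun a => Odd (rowLen π a))).card := by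
  rw [numOdd, ← card_filter_rowLen π Odd (by simp) K hK]

lemma card_parts_le : Multiset.card π.parts ≤ n := by
  have h := Multiset.card_nsmul_le_sum (s := π.parts) (fun x hx => π.parts_pos hx)
  simpa [π.parts_sum] using h

lemma rowLen_le (a : ℕ) : rowLen π a ≤ n := by
  rw [rowLen_eq_getD]
  by_cases h : a - 1 < (partsList π).length
  · rw [List.getD_eq_getElem?_getD, List.getElem?_eq_getElem h]
    simp only [Option.getD_some]
    have hmem : (partsList π)[a-1] ∈ π.parts := by
      rw [← partsList_coe π]
      exact List.getElem_mem h
    have := Multiset.single_le_sum (s := π.parts) (fun x _ => Nat.zero_le x) _ hmem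
    simpa [π.parts_sum] using this
  · rw [List.getD_eq_getElem?_getD, List.getElem?_eq_none (by omega)]
    simp

lemma le_rowLen_iff {a b : ℕ} (ha : 1 ≤ a) (hb : 1 ≤ b) :
    b ≤ rowLen π a ↔ a ≤ colLen π b := by
  set K := Multiset.card π.parts + a with hKdef
  have hcol : colLen π b = ((Finset.Icc 1 K).filter (fun x => b ≤ rowLen π x)).card :=
    colLen_eq π b hb K (by omega)
  constructor
  · intro hba
    have hsub : Finset.Icc 1 a ⊆ (Finset.Icc 1 K).filter (fun x => b ≤ rowLen π x) := by
      intro x hx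
      simp only [Finset.mem_Icc] at hx
      simp only [Finset.mem_filter, Finset.mem_Icc]
      exact ⟨⟨hx.1, by omega⟩, le_trans hba (rowLen_anti π hx.2)⟩
    have := Finset.card_le_card hsub
    rw [Nat.card_Icc] at this
    omega
  · intro hcl
    by_contra hba
    push_neg at hba
    have hsub : (Finset.Icc 1 K).filter (fun x => b ≤ rowLen π x) ⊆ Finset.Icc 1 (a - 1) := by
      intro x hx
      simp only [Finset.mem_filter, Finset.mem_Icc] at hx
      simp only [Finset.mem_Icc]
      refine ⟨hx.1.1, ?_⟩
      by_contra hxa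
      push_neg at hxa
      have := rowLen_anti π (show a ≤ x by omega)
      omega
    have := Finset.card_le_card hsub
    rw [Nat.card_Icc] at this
    omega

lemma rowLen_pos_iff {a : ℕ} (ha : 1 ≤ a) :
    1 ≤ rowLen π a ↔ a ≤ Multiset.card π.parts := by
  rw [le_rowLen_iff π ha le_rfl, colLen]
  have : π.parts.filter (fun j => 1 ≤ j) = π.parts :=
    Multiset.filter_eq_self.mpr (fun x hx => π.parts_pos hx)
  rw [this]

end Bridge
def bet {n : ℕ} (π : n.Partition) (a : ℕ) : ℤ := (rowLen π a : ℤ) - a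

section Beta
variable {n : ℕ} (π : n.Partition)

lemma bet_add (a d : ℕ) : bet π (a + d) ≤ bet π a - (d : ℤ) := by
  induction d with
  | zero => simp
  | succ d ih =>
    have h1 : rowLen π (a + d + 1) ≤ rowLen π (a + d) := rowLen_anti π (by omega)
    have h2 : bet π (a + (d + 1)) ≤ bet π (a + d) - 1 := by
      show (rowLen π (a + (d+1)) : ℤ) - _ ≤ (rowLen π (a + d) : ℤ) - _ - 1
      have hx : a + (d + 1) = a + d + 1 := by omega
      rw [hx]
      push_cast
      omega
    push_cast at ih ⊢
    omega

lemma bet_eq_neg (a : ℕ) (h : Multiset.card π.parts < a) : bet π a = -(a : ℤ) := by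
  have ha : 1 ≤ a := by omega
  have : ¬ (1 ≤ rowLen π a) := by
    rw [rowLen_pos_iff π ha]; omega
  show (rowLen π a : ℤ) - a = -(a : ℤ)
  omega

lemma bet_lower (a : ℕ) : -(a : ℤ) ≤ bet π a := by
  show -(a:ℤ) ≤ (rowLen π a : ℤ) - a
  have : (0:ℤ) ≤ (rowLen π a : ℤ) := by positivity
  omega

lemma bet_upper (a : ℕ) : bet π a ≤ (n : ℤ) - (a : ℤ) := by
  have := rowLen_le π a
  show (rowLen π a : ℤ) - a ≤ _
  omega

lemma closure (hc : IsCore 5 π) (a : ℕ) (ha : 1 ≤ a) :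
    ∃ a', 1 ≤ a' ∧ bet π a' = bet π a - 5 := by
  by_cases hR : rowLen π a = 0
  · refine ⟨a + 5, by omega, ?_⟩
    have hcard : Multiset.card π.parts < a := by
      by_contra h
      push_neg at h
      have := (rowLen_pos_iff π ha).mpr h
      omega
    rw [bet_eq_neg π _ hcard, bet_eq_neg π _ (by omega)]
    push_cast
    ring
  · by_contra hno
    push_neg at hno
    set c : ℤ := bet π a - 5 with hc5
    set W : ℕ := n + a + 6 with hW
    set T : Finset ℕ := (Finset.Icc 1 W).filter (fun x => c < bet π x) with hT
    have haT : a ∈ T := by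
      simp only [hT, Finset.mem_filter, Finset.mem_Icc]
      refine ⟨⟨ha, by omega⟩, by omega⟩
    have hTne : T.Nonempty := ⟨a, haT⟩
    set j := T.max' hTne with hj
    have hjT : j ∈ T := T.max'_mem hTne
    have hj1 : (1 ≤ j ∧ j ≤ W) ∧ c < bet π j := by
      simpa only [hT, Finset.mem_filter, Finset.mem_Icc] using hjT
    have haj : a ≤ j := T.le_max' a haT
    have hjW : j < W := by
      have hbu := bet_upper π W
      have hbl := bet_lower π a
      have hWn : (W:ℤ) = (n:ℤ) + a + 6 := by rw [hW]; push_cast; ring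
      by_contra hge
      push_neg at hge
      have : j = W := by omega
      rw [this] at hj1
      omega
    have hjsucc : bet π (j + 1) ≤ c - 1 := by
      have hnotin : j + 1 ∉ T := fun hmem => by have := T.le_max' _ hmem; omega
      have h1 : ¬ (c < bet π (j + 1)) := by
        intro hlt
        exact hnotin (by
          simp only [hT, Finset.mem_filter, Finset.mem_Icc]
          exact ⟨⟨by omega, by omega⟩, hlt⟩)
      have hne := hno (j + 1) (by omega)
      omega
    have hj4 : j ≤ a + 4 := by
      by_contra hja
      push_neg at hja
      have h1 := bet_add π a (j - a)
      have hxx : a + (j - a) = j := by omega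
      rw [hxx] at h1
      have hcast : (5:ℤ) ≤ ((j - a : ℕ) : ℤ) := by
        have : 5 ≤ j - a := by omega
        exact_mod_cast this
      omega
    have hbl1 := bet_lower π (j + 1)
    have hbpos : 1 ≤ c + j + 1 := by push_cast at hbl1; omega
    set b : ℕ := (c + j + 1).toNat with hb
    have hbz : (b : ℤ) = c + j + 1 := Int.toNat_of_nonneg (by omega)
    have hcol : ∀ x : ℕ, 1 ≤ x → (b ≤ rowLen π x ↔ x ≤ j) := by
      intro x hx
      have hRx : (rowLen π x : ℤ) = bet π x + x := by show _ = (rowLen π x : ℤ) - x + x; ring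
      constructor
      · intro hbx
        by_contra hxj
        push_neg at hxj
        have h1 := bet_add π (j + 1) (x - (j + 1))
        have hxx : (j + 1) + (x - (j + 1)) = x := by omega
        rw [hxx] at h1
        have hbxz : (b : ℤ) ≤ (rowLen π x : ℤ) := by exact_mod_cast hbx
        have hcast : ((x - (j+1) : ℕ) : ℤ) = (x:ℤ) - (j:ℤ) - 1 := by
          have : j + 1 ≤ x := by omega
          push_cast [this]
          omega
        omega
      · intro hxj
        have h1 := bet_add π x (j - x)
        have hxx : x + (j - x) = j := by omega
        rw [hxx] at h1
        have hcast : ((j - x : ℕ) : ℤ) = (j:ℤ) - (x:ℤ) := by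
          have : x ≤ j := hxj
          push_cast [this]
          omega
        have : (b : ℤ) ≤ (rowLen π x : ℤ) := by omega
        exact_mod_cast this
    have hjn : j ≤ n := by
      have h1 : b ≤ rowLen π j := (hcol j (by omega)).mpr le_rfl
      have h2 : 1 ≤ rowLen π j := by omega
      have := (rowLen_pos_iff π (by omega)).mp h2
      have := card_parts_le π
      omega
    have hcolval : colLen π b = j := by
      rw [colLen_eq π b (by omega) W (by have := card_parts_le π; omega)]
      have hset : (Finset.Icc 1 W).filter (fun x => b ≤ rowLen π x) = Finset.Icc 1 j := by
        ext x
        simp only [Finset.mem_filter, Finset.mem_Icc]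
        constructor
        · rintro ⟨⟨hx1, _⟩, hx2⟩
          exact ⟨hx1, (hcol x hx1).mp hx2⟩
        · rintro ⟨hx1, hx2⟩
          exact ⟨⟨hx1, by omega⟩, (hcol x hx1).mpr hx2⟩
      rw [hset, Nat.card_Icc]
      omega
    have hbrow : b ≤ rowLen π a := (hcol a ha).mpr haj
    have h5 := hc a b ha (by omega) hbrow
    apply h5
    unfold hookLen
    rw [hcolval]
    have h1 : (rowLen π a : ℤ) = c + 5 + a := by
      have : bet π a = (rowLen π a : ℤ) - a := rfl
      omega
    omega

lemma closure_iter (hc : IsCore 5 π) (a : ℕ) (ha : 1 ≤ a) (t : ℕ) :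
    ∃ a', 1 ≤ a' ∧ bet π a' = bet π a - 5 * t := by
  induction t with
  | zero => exact ⟨a, ha, by simp⟩
  | succ t ih =>
    obtain ⟨a'', ha'', hb⟩ := ih
    obtain ⟨a', ha', hb'⟩ := closure π hc a'' ha''
    refine ⟨a', ha', ?_⟩
    rw [hb', hb]
    push_cast
    ring

end Beta
def KK (n : ℕ) : ℕ := 10 * n + 20
def AA (n : ℕ) : ℤ := 2 * n + 4
def Bwin {n : ℕ} (π : n.Partition) : Finset ℤ := (Finset.Icc 1 (KK n)).image (bet π)

section Runner
variable {n : ℕ} (π : n.Partition)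

lemma KK_cast : ((KK n : ℕ) : ℤ) = 5 * AA n := by
  unfold KK AA; push_cast; ring

lemma bet_injOn : Set.InjOn (bet π) (Finset.Icc 1 (KK n)) := by
  intro x hx y hy hxy
  simp only [Finset.coe_Icc, Set.mem_Icc] at hx hy
  by_contra hne
  rcases Nat.lt_or_ge x y with h | h
  · have h1 := bet_add π x (y - x)
    have hxx : x + (y - x) = y := by omega
    rw [hxx] at h1
    have : (1:ℤ) ≤ ((y - x : ℕ) : ℤ) := by exact_mod_cast Nat.one_le_iff_ne_zero.mpr (by omega)
    omega
  · have hlt : y < x := by omega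
    have h1 := bet_add π y (x - y)
    have hxx : y + (x - y) = x := by omega
    rw [hxx] at h1
    have : (1:ℤ) ≤ ((x - y : ℕ) : ℤ) := by exact_mod_cast Nat.one_le_iff_ne_zero.mpr (by omega)
    omega

lemma Bwin_card : (Bwin π).card = KK n := by
  rw [Bwin, Finset.card_image_of_injOn (bet_injOn π), Nat.card_Icc]
  omega

lemma Bwin_lb {c : ℤ} (h : c ∈ Bwin π) : -((KK n : ℕ) : ℤ) ≤ c ∧ c ≤ (n : ℤ) := by
  rw [Bwin, Finset.mem_image] at h
  obtain ⟨a, ha, rfl⟩ := h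
  simp only [Finset.mem_Icc] at ha
  have h1 := bet_lower π a
  have h2 := bet_upper π a
  have : (a : ℤ) ≤ ((KK n : ℕ) : ℤ) := by exact_mod_cast ha.2
  have : (1 : ℤ) ≤ (a : ℤ) := by exact_mod_cast ha.1
  omega

lemma mem_Bwin_of {c : ℤ} (hK : -((KK n : ℕ) : ℤ) ≤ c) (h : ∃ a, 1 ≤ a ∧ bet π a = c) :
    c ∈ Bwin π := by
  obtain ⟨a, ha, rfl⟩ := h
  rcases le_or_gt a (KK n) with hle | hgt
  · rw [Bwin, Finset.mem_image]
    exact ⟨a, by simp [Finset.mem_Icc]; omega, rfl⟩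
  · exfalso
    have hcard : Multiset.card π.parts < a := by
      have h1 := card_parts_le π
      have : n < KK n := by unfold KK; omega
      omega
    rw [bet_eq_neg π a hcard] at hK
    have : ((KK n : ℕ) : ℤ) < (a : ℤ) := by exact_mod_cast hgt
    omega

lemma runner_exists (hc : IsCore 5 π) (r : ℤ) (hr0 : 0 ≤ r) (hr : r < 5) :
    ∃ m : ℤ, -(n : ℤ) - 2 ≤ m ∧ m ≤ (n : ℤ) ∧
      (Bwin π).filter (fun c => c % 5 = (r : ℤ))
        = (Finset.Icc (-(AA n)) m).image (fun k => (r : ℤ) + 5 * k) := by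
  set S : Finset ℤ := (Bwin π).filter (fun c => c % 5 = (r : ℤ)) with hS
  -- witness element
  set i₀ : ℕ := 5 * n + 10 - r.toNat with hi₀
  have hrt : (r.toNat : ℤ) = r ∧ r.toNat < 5 := by
    constructor
    · exact Int.toNat_of_nonneg hr0
    · omega
  have hi₀K : 1 ≤ i₀ ∧ i₀ ≤ KK n := by unfold i₀; unfold KK; omega
  have hi₀card : Multiset.card π.parts < i₀ := by
    have := card_parts_le π; unfold i₀; omega
  have hbet₀ : bet π i₀ = -(i₀ : ℤ) := bet_eq_neg π i₀ hi₀card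
  have hi₀cast : ((i₀ : ℕ) : ℤ) = 5 * (n : ℤ) + 10 - r := by
    unfold i₀
    push_cast [show r.toNat ≤ 5 * n + 10 by omega]
    omega
  have hw : -(i₀ : ℤ) ∈ S := by
    rw [hS, Finset.mem_filter]
    constructor
    · apply mem_Bwin_of π (by rw [KK_cast]; unfold AA; omega) ⟨i₀, by omega, hbet₀⟩
    · rw [hi₀cast]
      omega
  have hSne : S.Nonempty := ⟨_, hw⟩
  set T := S.max' hSne with hT
  have hTS : T ∈ S := S.max'_mem hSne
  have hTw : -(i₀ : ℤ) ≤ T := S.le_max' _ hw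
  have hT5 : T % 5 = (r : ℤ) := (Finset.mem_filter.mp hTS).2
  have hTB : T ∈ Bwin π := (Finset.mem_filter.mp hTS).1
  have hTub : T ≤ (n : ℤ) := (Bwin_lb π hTB).2
  refine ⟨(T - r) / 5, by omega, by omega, ?_⟩
  have h5m : 5 * ((T - r) / 5) = T - (r : ℤ) := by omega
  ext c
  simp only [hS, Finset.mem_filter, Finset.mem_image, Finset.mem_Icc]
  constructor
  · rintro ⟨hcB, hc5⟩
    have hlb := (Bwin_lb π hcB).1
    rw [KK_cast] at hlb
    refine ⟨(c - r) / 5, ⟨by omega, ?_⟩, by omega⟩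
    have : c ≤ T := S.le_max' c (by rw [hS, Finset.mem_filter]; exact ⟨hcB, hc5⟩)
    omega
  · rintro ⟨k, ⟨hk1, hk2⟩, rfl⟩
    constructor
    · -- membership via closure
      obtain ⟨a₀, ha₀, hba₀⟩ : ∃ a₀, 1 ≤ a₀ ∧ bet π a₀ = T := by
        rw [Bwin, Finset.mem_image] at hTB
        obtain ⟨a₀, ha₀, h⟩ := hTB
        simp only [Finset.mem_Icc] at ha₀
        exact ⟨a₀, ha₀.1, h⟩
      set t : ℕ := ((T - ((r : ℤ) + 5 * k)) / 5).toNat with ht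
      have htz : ((t : ℕ) : ℤ) = (T - ((r : ℤ) + 5 * k)) / 5 := by
        rw [ht, Int.toNat_of_nonneg (by omega)]
      obtain ⟨a', ha', hba'⟩ := closure_iter π hc a₀ ha₀ t
      apply mem_Bwin_of π (by rw [KK_cast]; unfold AA at hk1 ⊢; omega)
      refine ⟨a', ha', ?_⟩
      rw [hba', hba₀, htz]
      omega
    · omega

lemma fiber_sum (f : ℤ → ℤ) :
    ∑ c ∈ Bwin π, f c
      = ∑ r ∈ Finset.range 5, ∑ c ∈ (Bwin π).filter (fun c => c % 5 = (r : ℤ)), f c := by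
  rw [← Finset.sum_fiberwise_of_maps_to (g := fun c : ℤ => (c % 5).toNat)
    (t := Finset.range 5) (fun c _ => by simp [Finset.mem_range]; omega)]
  refine Finset.sum_congr rfl fun r hr => ?_
  refine Finset.sum_congr ?_ (fun _ _ => rfl)
  ext c
  simp only [Finset.mem_filter, Finset.mem_range] at hr ⊢
  constructor
  · rintro ⟨h1, h2⟩; exact ⟨h1, by omega⟩
  · rintro ⟨h1, h2⟩; exact ⟨h1, by omega⟩

lemma runner_card {r : ℤ} {m : ℤ} (hm : -(n:ℤ) - 2 ≤ m)
    (hset : (Bwin π).filter (fun c => c % 5 = (r : ℤ))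
      = (Finset.Icc (-(AA n)) m).image (fun k => (r : ℤ) + 5 * k)) :
    ((((Bwin π).filter (fun c => c % 5 = (r : ℤ))).card : ℕ) : ℤ) = m + AA n + 1 := by
  rw [hset, Finset.card_image_of_injOn (fun x _ y _ h => by omega), Int.card_Icc]
  rw [Int.toNat_of_nonneg (by unfold AA at *; omega)]
  ring

lemma runner_sum_c {r : ℤ} {m : ℤ} (hm : -(n:ℤ) - 2 ≤ m)
    (hset : (Bwin π).filter (fun c => c % 5 = (r : ℤ))
      = (Finset.Icc (-(AA n)) m).image (fun k => (r : ℤ) + 5 * k)) :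
    2 * ∑ c ∈ (Bwin π).filter (fun c => c % 5 = (r : ℤ)), c
      = 2 * (r : ℤ) * (m + AA n + 1) + 5 * (m - AA n) * (m + AA n + 1) := by
  rw [hset, Finset.sum_image (fun x _ y _ h => by omega)]
  rw [Finset.sum_add_distrib, Finset.sum_const, ← Finset.mul_sum]
  have hA : -(AA n) - 1 ≤ m := by unfold AA at *; omega
  have hg := gauss_Icc (-(AA n)) m (by omega)
  have hcard : (Finset.Icc (-(AA n)) m).card = (m + AA n + 1).toNat := by
    rw [Int.card_Icc]; congr 1; ring
  rw [hcard]
  have htn : ((m + AA n + 1).toNat : ℤ) = m + AA n + 1 := Int.toNat_of_nonneg (by omega)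
  rw [nsmul_eq_mul, htn]
  ring_nf
  ring_nf at hg
  linarith

lemma runner_sum_mod {r : ℤ} {m : ℤ} (hm : -(n:ℤ) - 2 ≤ m)
    (hset : (Bwin π).filter (fun c => c % 5 = (r : ℤ))
      = (Finset.Icc (-(AA n)) m).image (fun k => (r : ℤ) + 5 * k)) :
    2 * ∑ c ∈ (Bwin π).filter (fun c => c % 5 = (r : ℤ)), (c % 2)
      = (m + AA n) + ((r : ℤ) - AA n) % 2 + (m + (r : ℤ)) % 2 := by
  rw [hset, Finset.sum_image (fun x _ y _ h => by omega)]
  have h1 : ∀ k : ℤ, ((r : ℤ) + 5 * k) % 2 = (k + (r : ℤ)) % 2 := fun k => by omega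
  rw [Finset.sum_congr rfl (fun k _ => h1 k)]
  have h2 : ∑ k ∈ Finset.Icc (-(AA n)) m, (k + (r : ℤ)) % 2
      = ∑ k ∈ Finset.Icc (-(AA n) + (r:ℤ)) (m + (r:ℤ)), k % 2 := by
    rw [← Finset.map_add_right_Icc, Finset.sum_map]
    rfl
  rw [h2, mod2_sum_Icc _ _ (by unfold AA at *; omega)]
  omega

end Runner
section Global
variable {n : ℕ} (π : n.Partition)

lemma Icc_cast (K : ℕ) : Finset.Icc (1 : ℤ) (K : ℤ) = (Finset.Icc 1 K).image (Nat.cast) := by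
  ext c
  simp only [Finset.mem_Icc, Finset.mem_image]
  constructor
  · intro h
    exact ⟨c.toNat, by omega, by omega⟩
  · rintro ⟨a, ha, rfl⟩
    omega

lemma sum_Icc_cast (f : ℤ → ℤ) (K : ℕ) :
    ∑ c ∈ Finset.Icc (1 : ℤ) (K : ℤ), f c = ∑ a ∈ Finset.Icc 1 K, f (a : ℤ) := by
  rw [Icc_cast, Finset.sum_image (fun x _ y _ h => by exact_mod_cast h)]

lemma gauss_idx (K : ℕ) : 2 * ∑ a ∈ Finset.Icc 1 K, ((a : ℕ) : ℤ) = (K : ℤ) * ((K : ℤ) + 1) := by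
  rw [← sum_Icc_cast (fun c => c) K]
  rcases Nat.eq_zero_or_pos K with h | h
  · subst h; simp
  · have := gauss_Icc 1 (K : ℤ) (by omega)
    rw [this]
    ring

lemma sum_bet_eq (f : ℤ → ℤ) :
    ∑ c ∈ Bwin π, f c = ∑ a ∈ Finset.Icc 1 (KK n), f (bet π a) := by
  rw [Bwin, Finset.sum_image (fun x hx y hy h => bet_injOn π (by simpa using hx) (by simpa using hy) h)]

lemma n_eq_sum : (n : ℤ) = ∑ c ∈ Bwin π, c + ∑ a ∈ Finset.Icc 1 (KK n), ((a : ℕ) : ℤ) := by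
  rw [sum_bet_eq π (fun c => c)]
  have h1 : ∑ a ∈ Finset.Icc 1 (KK n), rowLen π a = n :=
    sum_rowLen π (KK n) (by have := card_parts_le π; unfold KK; omega)
  have h2 : ∑ a ∈ Finset.Icc 1 (KK n), ((rowLen π a : ℕ) : ℤ) = (n : ℤ) := by
    rw [← Nat.cast_sum, h1]
  have h3 : ∀ a : ℕ, bet π a = ((rowLen π a : ℕ) : ℤ) - (a : ℤ) := fun a => rfl
  rw [Finset.sum_congr rfl (fun a _ => h3 a), Finset.sum_sub_distrib, h2]
  ring

lemma fiber_sum5 (f : ℤ → ℤ) :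
    ∑ c ∈ Bwin π, f c
      = ∑ c ∈ (Bwin π).filter (fun c => c % 5 = (0 : ℤ)), f c
      + ∑ c ∈ (Bwin π).filter (fun c => c % 5 = (1 : ℤ)), f c
      + ∑ c ∈ (Bwin π).filter (fun c => c % 5 = (2 : ℤ)), f c
      + ∑ c ∈ (Bwin π).filter (fun c => c % 5 = (3 : ℤ)), f c
      + ∑ c ∈ (Bwin π).filter (fun c => c % 5 = (4 : ℤ)), f c := by
  rw [fiber_sum π f]
  simp only [Finset.sum_range_succ, Finset.sum_range_zero, Nat.cast_zero, Nat.cast_one,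
    Nat.cast_ofNat, zero_add]

set_option maxHeartbeats 2000000 in
lemma runner_data (hc : IsCore 5 π) :
    ∃ m0 m1 m2 m3 m4 : ℤ,
      m0 + m1 + m2 + m3 + m4 = -5 ∧
      2 * (n : ℤ) = 20 + 2 * (m1 + 2 * m2 + 3 * m3 + 4 * m4)
        + 5 * ((m0 ^ 2 + m0) + (m1 ^ 2 + m1) + (m2 ^ 2 + m2) + (m3 ^ 2 + m3) + (m4 ^ 2 + m4)) ∧
      2 * (∑ c ∈ Bwin π, (c % 2))
        = 5 * AA n - 3
          + (m0 % 2 + (m1 + 1) % 2 + (m2 + 2) % 2 + (m3 + 3) % 2 + (m4 + 4) % 2) := by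
  obtain ⟨m0, hm0a, hm0b, hset0⟩ := runner_exists π hc 0 (by norm_num) (by norm_num)
  obtain ⟨m1, hm1a, hm1b, hset1⟩ := runner_exists π hc 1 (by norm_num) (by norm_num)
  obtain ⟨m2, hm2a, hm2b, hset2⟩ := runner_exists π hc 2 (by norm_num) (by norm_num)
  obtain ⟨m3, hm3a, hm3b, hset3⟩ := runner_exists π hc 3 (by norm_num) (by norm_num)
  obtain ⟨m4, hm4a, hm4b, hset4⟩ := runner_exists π hc 4 (by norm_num) (by norm_num)
  have hA : AA n = 2 * (n : ℤ) + 4 := by unfold AA; push_cast; ring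
  -- card identity
  have hcards : ((KK n : ℕ) : ℤ)
      = (m0 + AA n + 1) + (m1 + AA n + 1) + (m2 + AA n + 1) + (m3 + AA n + 1) + (m4 + AA n + 1) := by
    have h1 := fiber_sum5 π (fun _ => (1 : ℤ))
    simp only [Finset.sum_const, nsmul_eq_mul, mul_one] at h1
    rw [Bwin_card π] at h1
    rw [h1, runner_card π hm0a hset0, runner_card π hm1a hset1, runner_card π hm2a hset2,
      runner_card π hm3a hset3, runner_card π hm4a hset4]
  have hsum : m0 + m1 + m2 + m3 + m4 = -5 := by
    rw [KK_cast] at hcards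
    omega
  refine ⟨m0, m1, m2, m3, m4, hsum, ?_, ?_⟩
  · -- n identity
    have h2 := fiber_sum5 π (fun c => c)
    have hn := n_eq_sum π
    have hg := gauss_idx (KK n)
    have hKA := KK_cast (n := n)
    have hs0 := runner_sum_c π hm0a hset0
    have hs1 := runner_sum_c π hm1a hset1
    have hs2 := runner_sum_c π hm2a hset2
    have hs3 := runner_sum_c π hm3a hset3
    have hs4 := runner_sum_c π hm4a hset4
    have e1 : 2 * (n : ℤ)
        = (2 * 0 * (m0 + AA n + 1) + 5 * (m0 - AA n) * (m0 + AA n + 1))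
        + (2 * 1 * (m1 + AA n + 1) + 5 * (m1 - AA n) * (m1 + AA n + 1))
        + (2 * 2 * (m2 + AA n + 1) + 5 * (m2 - AA n) * (m2 + AA n + 1))
        + (2 * 3 * (m3 + AA n + 1) + 5 * (m3 - AA n) * (m3 + AA n + 1))
        + (2 * 4 * (m4 + AA n + 1) + 5 * (m4 - AA n) * (m4 + AA n + 1))
        + (5 * AA n) * (5 * AA n + 1) := by
      rw [← hs0, ← hs1, ← hs2, ← hs3, ← hs4]
      have : 2 * (n:ℤ) = 2 * (∑ c ∈ Bwin π, c) + 2 * ∑ a ∈ Finset.Icc 1 (KK n), ((a : ℕ) : ℤ) := by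
        rw [hn]; ring
      rw [this, h2, hg, hKA]
      ring
    linear_combination e1
  · -- OB identity
    have h2 := fiber_sum5 π (fun c => c % 2)
    have hs0 := runner_sum_mod π hm0a hset0
    have hs1 := runner_sum_mod π hm1a hset1
    have hs2 := runner_sum_mod π hm2a hset2
    have hs3 := runner_sum_mod π hm3a hset3
    have hs4 := runner_sum_mod π hm4a hset4
    have e1 : 2 * (∑ c ∈ Bwin π, (c % 2))
        = ((m0 + AA n) + ((0:ℤ) - AA n) % 2 + (m0 + (0:ℤ)) % 2)
        + ((m1 + AA n) + ((1:ℤ) - AA n) % 2 + (m1 + (1:ℤ)) % 2)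
        + ((m2 + AA n) + ((2:ℤ) - AA n) % 2 + (m2 + (2:ℤ)) % 2)
        + ((m3 + AA n) + ((3:ℤ) - AA n) % 2 + (m3 + (3:ℤ)) % 2)
        + ((m4 + AA n) + ((4:ℤ) - AA n) % 2 + (m4 + (4:ℤ)) % 2) := by
      rw [← hs0, ← hs1, ← hs2, ← hs3, ← hs4, h2]
      ring
    rw [e1]
    have h00 : (m0 + (0:ℤ)) % 2 = m0 % 2 := by omega
    have hA0 : ((0:ℤ) - AA n) % 2 = 0 := by rw [hA]; omega
    have hA1 : ((1:ℤ) - AA n) % 2 = 1 := by rw [hA]; omega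
    have hA2 : ((2:ℤ) - AA n) % 2 = 0 := by rw [hA]; omega
    have hA3 : ((3:ℤ) - AA n) % 2 = 1 := by rw [hA]; omega
    have hA4 : ((4:ℤ) - AA n) % 2 = 0 := by rw [hA]; omega
    rw [h00, hA0, hA1, hA2, hA3, hA4]
    clear hset0 hset1 hset2 hset3 hset4 h2 hs0 hs1 hs2 hs3 hs4 e1 hcards
    omega

end Global
section Srank
variable {n : ℕ} (π : n.Partition)

lemma even_count : ∀ j : ℕ, ((Finset.Icc 1 j).filter (fun a => a % 2 = 0)).card = j / 2 := by
  intro j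
  induction j with
  | zero => simp
  | succ j ih =>
    have hins : Finset.Icc 1 (j + 1) = insert (j + 1) (Finset.Icc 1 j) := by
      ext x; simp only [Finset.mem_Icc, Finset.mem_insert]; omega
    rw [hins, Finset.filter_insert]
    by_cases h : (j + 1) % 2 = 0
    · rw [if_pos h, Finset.card_insert_of_notMem (by simp [Finset.mem_filter])]
      omega
    · rw [if_neg h]
      omega

lemma hKcard : Multiset.card π.parts ≤ KK n := by
  have := card_parts_le π; unfold KK; omega

lemma numOdd_int : (numOdd π : ℤ) = ∑ a ∈ Finset.Icc 1 (KK n), ((rowLen π a : ℤ) % 2) := by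
  rw [numOdd_eq π (KK n) (hKcard π), Finset.card_filter]
  push_cast
  refine Finset.sum_congr rfl fun a _ => ?_
  rcases Nat.even_or_odd (rowLen π a) with h | h
  · rw [if_neg (by simp [Nat.not_odd_iff_even.mpr h])]
    rw [Nat.even_iff] at h
    omega
  · rw [if_pos h]
    rw [Nat.odd_iff] at h
    omega

lemma numOddConj_int : (numOddConj π : ℤ) = ∑ b ∈ Finset.Icc 1 n, ((colLen π b : ℤ) % 2) := by
  rw [numOddConj, Finset.card_filter]
  push_cast
  refine Finset.sum_congr rfl fun b _ => ?_
  rcases Nat.even_or_odd (colLen π b) with h | h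
  · rw [if_neg (by simp [Nat.not_odd_iff_even.mpr h])]
    rw [Nat.even_iff] at h
    omega
  · rw [if_pos h]
    rw [Nat.odd_iff] at h
    omega

lemma colLen_lt_iff (a b : ℕ) (ha : 1 ≤ a) (hb : 1 ≤ b) :
    (if a ≤ colLen π b then (1:ℤ) else 0) = (if b ≤ rowLen π a then (1:ℤ) else 0) := by
  by_cases h : b ≤ rowLen π a
  · rw [if_pos h, if_pos ((le_rowLen_iff π ha hb).mp h)]
  · rw [if_neg h, if_neg (fun hcl => h ((le_rowLen_iff π ha hb).mpr hcl))]

lemma inner_count (a : ℕ) : ∑ b ∈ Finset.Icc 1 n, (if b ≤ rowLen π a then (1:ℤ) else 0)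
    = (rowLen π a : ℤ) := by
  rw [← Finset.sum_filter]
  have hset : (Finset.Icc 1 n).filter (fun b => b ≤ rowLen π a) = Finset.Icc 1 (rowLen π a) := by
    ext x
    have := rowLen_le π a
    simp only [Finset.mem_filter, Finset.mem_Icc]
    omega
  rw [hset, Finset.sum_const, Nat.card_Icc]
  simp

lemma sum_colLen : ∑ b ∈ Finset.Icc 1 n, (colLen π b : ℤ) = (n : ℤ) := by
  have h1 : ∀ b ∈ Finset.Icc 1 n, (colLen π b : ℤ)
      = ∑ a ∈ Finset.Icc 1 (KK n), (if b ≤ rowLen π a then (1:ℤ) else 0) := by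
    intro b hb
    simp only [Finset.mem_Icc] at hb
    rw [colLen_eq π b hb.1 (KK n) (hKcard π), Finset.card_filter]
    push_cast
    rfl
  rw [Finset.sum_congr rfl h1, Finset.sum_comm]
  rw [Finset.sum_congr rfl (fun a _ => inner_count π a)]
  have h2 : ∑ a ∈ Finset.Icc 1 (KK n), ((rowLen π a : ℕ) : ℤ) = ((n : ℕ) : ℤ) := by
    rw [← Nat.cast_sum, sum_rowLen π (KK n) (hKcard π)]
  exact h2

lemma srank_eq : srank π
    = 2 * ((∑ b ∈ Finset.Icc 1 n, ((colLen π b : ℤ) / 2))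
         - (∑ a ∈ Finset.Icc 1 (KK n), ((rowLen π a : ℤ) / 2))) := by
  rw [srank, numOdd_int, numOddConj_int]
  have hR : ∀ a ∈ Finset.Icc 1 (KK n), ((rowLen π a : ℤ) % 2)
      = (rowLen π a : ℤ) - 2 * ((rowLen π a : ℤ) / 2) := fun a _ => by omega
  have hC : ∀ b ∈ Finset.Icc 1 n, ((colLen π b : ℤ) % 2)
      = (colLen π b : ℤ) - 2 * ((colLen π b : ℤ) / 2) := fun b _ => by omega
  rw [Finset.sum_congr rfl hR, Finset.sum_congr rfl hC]
  rw [Finset.sum_sub_distrib, Finset.sum_sub_distrib]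
  have h2 : ∑ a ∈ Finset.Icc 1 (KK n), ((rowLen π a : ℕ) : ℤ) = ((n : ℕ) : ℤ) := by
    rw [← Nat.cast_sum, sum_rowLen π (KK n) (hKcard π)]
  rw [h2, sum_colLen π, ← Finset.mul_sum, ← Finset.mul_sum]
  ring

lemma Yb_row : ∑ b ∈ Finset.Icc 1 n, ((colLen π b : ℤ) / 2)
    = ∑ a ∈ Finset.Icc 1 (KK n), (if a % 2 = 0 then (rowLen π a : ℤ) else 0) := by
  have h1 : ∀ b ∈ Finset.Icc 1 n, ((colLen π b : ℤ) / 2)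
      = ∑ a ∈ Finset.Icc 1 (KK n), (if a % 2 = 0 ∧ a ≤ colLen π b then (1:ℤ) else 0) := by
    intro b hb
    rw [← Finset.sum_filter]
    have hcolK : colLen π b ≤ KK n := by
      have h2 : colLen π b ≤ Multiset.card π.parts := by
        rw [colLen]
        exact Multiset.card_le_card (Multiset.filter_le _ _)
      have := hKcard π
      omega
    have hset : (Finset.Icc 1 (KK n)).filter (fun a => a % 2 = 0 ∧ a ≤ colLen π b)
        = (Finset.Icc 1 (colLen π b)).filter (fun a => a % 2 = 0) := by
      ext x
      simp only [Finset.mem_filter, Finset.mem_Icc]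
      constructor
      · rintro ⟨⟨h1, _⟩, h2, h3⟩; exact ⟨⟨h1, h3⟩, h2⟩
      · rintro ⟨⟨h1, h3⟩, h2⟩; exact ⟨⟨h1, by omega⟩, h2, h3⟩
    rw [hset, Finset.sum_const, even_count (colLen π b), nsmul_eq_mul, mul_one]
    omega
  rw [Finset.sum_congr rfl h1, Finset.sum_comm]
  refine Finset.sum_congr rfl fun a ha => ?_
  simp only [Finset.mem_Icc] at ha
  by_cases h : a % 2 = 0
  · simp only [h, true_and, if_pos]
    have := Finset.sum_congr rfl
      (fun b (hb : b ∈ Finset.Icc 1 n) => colLen_lt_iff π a b ha.1 (Finset.mem_Icc.mp hb).1)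
    rw [show (fun b => if a ≤ colLen π b then (1:ℤ) else 0) = fun b => if a ≤ colLen π b then (1:ℤ) else 0 from rfl]
    calc ∑ b ∈ Finset.Icc 1 n, (if a ≤ colLen π b then (1:ℤ) else 0)
        = ∑ b ∈ Finset.Icc 1 n, (if b ≤ rowLen π a then (1:ℤ) else 0) := by
          refine Finset.sum_congr rfl fun b hb => colLen_lt_iff π a b ha.1 (Finset.mem_Icc.mp hb).1
      _ = (rowLen π a : ℤ) := inner_count π a
  · simp only [h, false_and, if_neg, if_false]
    simp

lemma rowblack2 (a : ℕ) :
    2 * ∑ k ∈ Finset.Icc (1 - (a:ℤ)) (bet π a), (k % 2)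
      = ((rowLen π a : ℤ) - 1) + (1 - (a:ℤ)) % 2 + (bet π a) % 2 := by
  have hlow := bet_lower π a
  have hb : bet π a = (rowLen π a : ℤ) - a := rfl
  rw [mod2_sum_Icc (1 - (a:ℤ)) (bet π a) (by omega)]
  omega

lemma parity_main : (2:ℤ) ∣ ((∑ a ∈ Finset.Icc 1 (KK n), ((rowLen π a : ℤ) / 2))
    + (∑ b ∈ Finset.Icc 1 n, ((colLen π b : ℤ) / 2))
    - ∑ a ∈ Finset.Icc 1 (KK n), ∑ k ∈ Finset.Icc (1 - (a:ℤ)) (bet π a), (k % 2)) := by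
  rw [Yb_row π, ← Finset.sum_add_distrib, ← Finset.sum_sub_distrib]
  refine Finset.dvd_sum fun a ha => ?_
  have h2 := rowblack2 π a
  have hb : bet π a = (rowLen π a : ℤ) - a := rfl
  by_cases h : a % 2 = 0
  · rw [if_pos h]
    omega
  · rw [if_neg h]
    omega

lemma Ev_sum : 2 * (∑ a ∈ Finset.Icc 1 (KK n), ((1 - (a:ℤ)) % 2)) = ((KK n : ℕ) : ℤ) := by
  have h1 : ∀ a ∈ Finset.Icc 1 (KK n), ((1 - (a:ℤ)) % 2) = ((a:ℤ) + 1) % 2 :=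
    fun a _ => by omega
  rw [Finset.sum_congr rfl h1]
  have h2 : ∑ a ∈ Finset.Icc 1 (KK n), (((a:ℤ) + 1) % 2)
      = ∑ c ∈ Finset.Icc (1:ℤ) ((KK n : ℕ) : ℤ), ((c + 1) % 2) := by
    rw [sum_Icc_cast (fun c => (c + 1) % 2) (KK n)]
  rw [h2]
  have h3 : ∑ c ∈ Finset.Icc (1:ℤ) ((KK n : ℕ) : ℤ), ((c + 1) % 2)
      = ∑ k ∈ Finset.Icc (2:ℤ) (((KK n : ℕ) : ℤ) + 1), (k % 2) := by
    rw [show (2:ℤ) = 1 + 1 from rfl, ← Finset.map_add_right_Icc, Finset.sum_map]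
    rfl
  rw [h3, mod2_sum_Icc 2 (((KK n : ℕ) : ℤ) + 1) (by unfold KK; push_cast; omega)]
  have : ((KK n : ℕ) : ℤ) % 2 = 0 := by unfold KK; push_cast; omega
  omega

lemma NB4 : 4 * (∑ a ∈ Finset.Icc 1 (KK n), ∑ k ∈ Finset.Icc (1 - (a:ℤ)) (bet π a), (k % 2))
    = 2 * (n:ℤ) - ((KK n : ℕ) : ℤ)
      + 2 * ∑ a ∈ Finset.Icc 1 (KK n), (bet π a % 2) := by
  have h1 : ∀ a ∈ Finset.Icc 1 (KK n),
      2 * ∑ k ∈ Finset.Icc (1 - (a:ℤ)) (bet π a), (k % 2)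
        = ((rowLen π a : ℤ) - 1) + (1 - (a:ℤ)) % 2 + (bet π a) % 2 := fun a _ => rowblack2 π a
  have h2 : 2 * (∑ a ∈ Finset.Icc 1 (KK n), ∑ k ∈ Finset.Icc (1 - (a:ℤ)) (bet π a), (k % 2))
      = ∑ a ∈ Finset.Icc 1 (KK n), (((rowLen π a : ℤ) - 1) + (1 - (a:ℤ)) % 2 + (bet π a) % 2) := by
    rw [Finset.mul_sum]
    exact Finset.sum_congr rfl h1
  have hRsum : ∑ a ∈ Finset.Icc 1 (KK n), ((rowLen π a : ℕ) : ℤ) = ((n : ℕ) : ℤ) := by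
    rw [← Nat.cast_sum, sum_rowLen π (KK n) (hKcard π)]
  have hcardIcc : ((Finset.Icc 1 (KK n)).card : ℤ) = ((KK n : ℕ) : ℤ) := by
    rw [Nat.card_Icc]; push_cast; omega
  have hEv := Ev_sum (n := n)
  have h3 : ∑ a ∈ Finset.Icc 1 (KK n), (((rowLen π a : ℤ) - 1) + (1 - (a:ℤ)) % 2 + (bet π a) % 2)
      = ((n:ℤ) - ((KK n : ℕ) : ℤ)) + (∑ a ∈ Finset.Icc 1 (KK n), ((1 - (a:ℤ)) % 2))
        + ∑ a ∈ Finset.Icc 1 (KK n), (bet π a % 2) := by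
    rw [Finset.sum_add_distrib, Finset.sum_add_distrib, Finset.sum_sub_distrib,
      Finset.sum_const, hRsum]
    simp only [nsmul_eq_mul, mul_one]
    rw [hcardIcc]
  omega

end Srank


theorem srank_mod4 {n : ℕ} (π : n.Partition) (hc : IsCore 5 π)
    (hn : (n : ℤ) % 4 = 0 ∨ (n : ℤ) % 4 = 1) : srank π % 4 = 0 := by
  obtain ⟨m0, m1, m2, m3, m4, hsum, h2n, hOB⟩ := runner_data π hc
  have harith := arith_main m0 m1 m2 m3 m4 (n : ℤ) hsum h2n hn
  have hOB' : ∑ c ∈ Bwin π, (c % 2) = ∑ a ∈ Finset.Icc 1 (KK n), (bet π a % 2) :=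
    sum_bet_eq π (fun c => c % 2)
  rw [hOB'] at hOB
  have hNB4 := NB4 π
  have hKA := KK_cast (n := n)
  have hpar := parity_main π
  have hsr := srank_eq π
  rw [hsr]
  omega

theorem count_eq {N : ℕ} (hN : N % 4 = 0 ∨ N % 4 = 1) : a5srank 0 N = coreCount 5 N := by
  unfold a5srank coreCount
  congr 1
  ext π
  simp only [Finset.mem_filter, Finset.mem_univ, true_and]
  constructor
  · exact fun h => h.1
  · intro h
    refine ⟨h, srank_mod4 π h ?_⟩
    omega


/-- `a_{5,0}(4n) = a₅(4n)` and `a_{5,0}(4n+1) = a₅(4n+1)`. -/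
theorem fivecore_srank_zero_mod_four (n : ℕ) :
    a5srank 0 (4 * n) = coreCount 5 (4 * n) ∧
      a5srank 0 (4 * n + 1) = coreCount 5 (4 * n + 1) :=
  ⟨count_eq (by omega), count_eq (by omega)⟩

end AndrewsStanley
end
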